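/- Let ⊗ be a continuous t-norm on [0,1] and let x ∈ [0,1] be a non-idempotent element. Then there exist idempotent elements e, f ∈ [0,1] with e < x < f such that the closed interval [e,f] is closed under ⊗ and there is a strictly increasing bijection φ : [e,f] → [0,1] with φ(e) = 0, φ(f) = 1 and either φ(a⊗b) = φ(a)·φ(b) for all a, b ∈ [e,f], or φ(a⊗b) = max(0, φ(a)+φ(b)−1) for all a, b ∈ [e,f]; that is, the quantale [e,f] (with tensor the restriction of ⊗ and neutral element f) is isomorphic to [0,1] with either multiplication or the Łukasiewicz tensor. -/

import Mathlib

open unitInterval Set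

/-- A continuous t-norm on the unit interval `[0,1]`. -/
structure ContinuousTNorm where
  mul : I → I → I
  comm : ∀ x y, mul x y = mul y x
  assoc : ∀ x y z, mul (mul x y) z = mul x (mul y z)
  mono : ∀ ⦃x₁ x₂ y₁ y₂ : I⦄, x₁ ≤ x₂ → y₁ ≤ y₂ → mul x₁ y₁ ≤ mul x₂ y₂
  continuous : Continuous fun p : I × I => mul p.1 p.2
  one_mul' : ∀ x, mul 1 x = x

/-- The `n`-fold `⊗`-power `xⁿ`. -/
def ContinuousTNorm.pow (T : ContinuousTNorm) (x : I) : ℕ → I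
  | 0 => 1
  | n + 1 => T.mul x (T.pow x n)
open Filter Topology

instance : Fact ((0:ℝ) ≤ 1) := ⟨zero_le_one⟩

namespace ContinuousTNorm

variable (T : ContinuousTNorm)

lemma mul_one (a : I) : T.mul a 1 = a := by rw [T.comm]; exact T.one_mul' a

lemma mul_le_left (a b : I) : T.mul a b ≤ a := by
  simpa [T.mul_one] using T.mono (le_refl a) ((le_one' : b ≤ 1))

lemma mul_le_right (a b : I) : T.mul a b ≤ b := by
  simpa [T.one_mul'] using T.mono ((le_one' : a ≤ 1)) (le_refl b)

lemma cont_left (b : I) : Continuous fun a => T.mul a b :=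
  T.continuous.comp (continuous_id.prodMk continuous_const)

lemma cont_right (a : I) : Continuous fun b => T.mul a b :=
  T.continuous.comp (continuous_const.prodMk continuous_id)

lemma cont_sq : Continuous fun a => T.mul a a :=
  T.continuous.comp (continuous_id.prodMk continuous_id)

lemma mul_zero (a : I) : T.mul a 0 = 0 :=
  le_antisymm (T.mul_le_right a 0) nonneg'

lemma pow_zero (a : I) : T.pow a 0 = 1 := rfl
lemma pow_succ (a : I) (n : ℕ) : T.pow a (n+1) = T.mul a (T.pow a n) := rfl
lemma pow_one (a : I) : T.pow a 1 = a := by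
  show T.mul a (T.pow a 0) = a; rw [pow_zero, T.mul_one]

lemma pow_add (a : I) (m n : ℕ) : T.pow a (m + n) = T.mul (T.pow a m) (T.pow a n) := by
  induction m with
  | zero => simp [pow_zero, T.one_mul']
  | succ k ih =>
    have : k + 1 + n = (k + n) + 1 := by omega
    rw [this, pow_succ, ih, pow_succ, T.assoc]

lemma pow_mul (a : I) (m n : ℕ) : T.pow a (m * n) = T.pow (T.pow a m) n := by
  induction n with
  | zero => simp [pow_zero]
  | succ k ih =>
    have : m * (k + 1) = m + m * k := by ring
    rw [this, T.pow_add, ih, pow_succ, T.comm]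

lemma pow_mono_base {a b : I} (h : a ≤ b) (n : ℕ) : T.pow a n ≤ T.pow b n := by
  induction n with
  | zero => exact le_refl _
  | succ k ih => exact T.mono h ih

lemma pow_anti_exp (a : I) {m n : ℕ} (h : m ≤ n) : T.pow a n ≤ T.pow a m := by
  obtain ⟨k, rfl⟩ := Nat.exists_eq_add_of_le h
  rw [T.pow_add]; exact T.mul_le_left _ _

lemma pow_idem {a : I} (h : T.mul a a = a) {n : ℕ} (hn : 1 ≤ n) : T.pow a n = a := by
  induction n with
  | zero => omega
  | succ k ih =>
    rcases Nat.eq_or_lt_of_le hn with h1 | h1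
    · rw [← h1, pow_one]
    · have hk : 1 ≤ k := by omega
      rw [pow_succ, ih hk, h]

lemma pow_ge_idem {c a : I} (hc : T.mul c c = c) (h : c ≤ a) (n : ℕ) : c ≤ T.pow a n := by
  induction n with
  | zero => exact (le_one' : c ≤ 1)
  | succ k ih => calc c = T.mul c c := hc.symm
                  _ ≤ T.mul a (T.pow a k) := T.mono h ih

end ContinuousTNorm

/-- Bundled context: idempotents `e < x < f` with no idempotents strictly between. -/
structure TSetup where
  T : ContinuousTNorm
  x : I
  e : I
  f : I
  he : T.mul e e = e
  hf : T.mul f f = f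
  hex : e < x
  hxf : x < f
  noidem : ∀ c : I, e < c → c < f → T.mul c c ≠ c

namespace TSetup

variable (S : TSetup)

/-- `f` is a unit on `[0, f]`. -/
lemma unit {a : I} (ha : a ≤ S.f) : S.T.mul S.f a = a := by
  have h0 : S.T.mul 0 S.f = 0 := by rw [S.T.comm]; exact S.T.mul_zero _
  have h1 : S.T.mul 1 S.f = S.f := S.T.one_mul' _
  have hmem : a ∈ Icc (S.T.mul 0 S.f) (S.T.mul 1 S.f) := by
    rw [h0, h1]; exact ⟨a.2.1, ha⟩
  obtain ⟨s, _, hs⟩ := intermediate_value_Icc (nonneg' : (0:I) ≤ 1) (S.T.cont_left S.f).continuousOn hmem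
  simp only at hs
  calc S.T.mul S.f a = S.T.mul S.f (S.T.mul s S.f) := by rw [hs]
    _ = S.T.mul (S.T.mul s S.f) S.f := by rw [S.T.comm]
    _ = S.T.mul s (S.T.mul S.f S.f) := S.T.assoc _ _ _
    _ = S.T.mul s S.f := by rw [S.hf]
    _ = a := hs

lemma mul_e_left {b : I} (hb : S.e ≤ b) : S.T.mul S.e b = S.e := by
  refine le_antisymm ?_ ?_
  · calc S.T.mul S.e b ≤ S.T.mul S.e 1 := S.T.mono (le_refl _) (le_one' : b ≤ 1)
      _ = S.e := S.T.mul_one _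
  · calc S.e = S.T.mul S.e S.e := S.he.symm
      _ ≤ S.T.mul S.e b := S.T.mono (le_refl _) hb

lemma hef : S.e < S.f := S.hex.trans S.hxf

/-- Archimedean property: the infimum of the powers of `x` is `e`. -/
lemma arch : (⨅ n, S.T.pow S.x n) = S.e := by
  set L := ⨅ n, S.T.pow S.x n with hL
  have hanti : Antitone fun n => S.T.pow S.x n := fun m n h => S.T.pow_anti_exp _ h
  have htd : Tendsto (fun n => S.T.pow S.x n) atTop (𝓝 L) :=
    tendsto_atTop_ciInf hanti (OrderBot.bddBelow _)
  have htd2 : Tendsto (fun n => S.T.pow S.x (2*n)) atTop (𝓝 L) :=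
    htd.comp (tendsto_atTop_mono (fun n => by simp; omega) tendsto_id)
  have heq : ∀ n, S.T.pow S.x (2*n) = S.T.mul (S.T.pow S.x n) (S.T.pow S.x n) := by
    intro n; rw [two_mul, S.T.pow_add]
  have htd3 : Tendsto (fun n => S.T.mul (S.T.pow S.x n) (S.T.pow S.x n)) atTop
      (𝓝 (S.T.mul L L)) :=
    (S.T.continuous.tendsto (L, L)).comp (htd.prodMk_nhds htd)
  have hidem : S.T.mul L L = L := by
    refine tendsto_nhds_unique ?_ htd2
    simpa only [← heq] using htd3
  have hLe : S.e ≤ L := le_ciInf fun n => S.T.pow_ge_idem S.he S.hex.le n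
  have hLx : L ≤ S.x := by
    have := ciInf_le (OrderBot.bddBelow (range fun n => S.T.pow S.x n)) 1
    rwa [S.T.pow_one] at this
  rcases eq_or_lt_of_le hLe with h | h
  · exact h.symm
  · exact absurd hidem (S.noidem L h (lt_of_le_of_lt hLx S.hxf))
end TSetup

/-- The canonical dyadic approximation from above. -/
noncomputable def msq (s : ℝ) (k : ℕ) : ℕ := ⌊s * 2^k⌋₊ + 1

lemma msq_gt {s : ℝ} (hs : 0 ≤ s) (k : ℕ) : s < (msq s k : ℝ) / 2^k := by
  have h2 : (0:ℝ) < 2^k := by positivity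
  rw [lt_div_iff₀ h2]
  have := Nat.lt_floor_add_one (s * 2^k)
  push_cast [msq]
  linarith

lemma msq_le {s : ℝ} (hs : 0 ≤ s) (k : ℕ) : (msq s k : ℝ) / 2^k ≤ s + (1/2)^k := by
  have h2 : (0:ℝ) < 2^k := by positivity
  rw [div_le_iff₀ h2]
  have := Nat.floor_le (by positivity : (0:ℝ) ≤ s * 2^k)
  push_cast [msq]
  rw [add_mul, one_div, inv_pow, inv_mul_cancel₀ (ne_of_gt h2)]
  linarith

lemma msq_mono {s : ℝ} (hs : 0 ≤ s) (k : ℕ) :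
    (msq s (k+1) : ℝ) / 2^(k+1) ≤ (msq s k : ℝ) / 2^k := by
  have h2 : (0:ℝ) < 2^k := by positivity
  have hfl : (⌊s * 2^(k+1)⌋₊:ℝ) ≤ 2 * (⌊s * 2^k⌋₊:ℝ) + 1 := by
    have hlt : s * 2^(k+1) < 2 * ⌊s * 2^k⌋₊ + 2 := by
      have h1 := Nat.lt_floor_add_one (s * 2^k)
      have h21 : (2:ℝ)^(k+1) = 2 * 2^k := by ring
      rw [h21]
      nlinarith [h1]
    have : ⌊s * 2^(k+1)⌋₊ < 2 * ⌊s * 2^k⌋₊ + 2 := by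
      rw [Nat.floor_lt (by positivity)]
      push_cast
      linarith
    have := Nat.lt_succ_iff.mp (by omega : ⌊s * 2^(k+1)⌋₊ < (2 * ⌊s * 2^k⌋₊ + 1) + 1)
    exact_mod_cast this
  rw [div_le_div_iff₀ (by positivity) h2]
  push_cast [msq]
  have h21 : (2:ℝ)^(k+1) = 2 * 2^k := by ring
  nlinarith [hfl, h2, h21, mul_le_mul_of_nonneg_right hfl h2.le]

lemma msq_tendsto {s : ℝ} (hs : 0 ≤ s) :
    Filter.Tendsto (fun k => (msq s k : ℝ) / 2^k) Filter.atTop (𝓝 s) := by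
  have h0 : Filter.Tendsto (fun k : ℕ => s + (1/2:ℝ)^k) Filter.atTop (𝓝 (s + 0)) :=
    tendsto_const_nhds.add (tendsto_pow_atTop_nhds_zero_of_lt_one (by norm_num) (by norm_num))
  rw [add_zero] at h0
  exact tendsto_of_tendsto_of_tendsto_of_le_of_le tendsto_const_nhds h0
    (fun k => (msq_gt hs k).le) (fun k => msq_le hs k)

namespace TSetup
variable (S : TSetup)

/-- Existence of a square root above `y` (below `f`). -/
lemma exists_sqrt {y : I} (hy : y ≤ S.f) : ∃ z ∈ Icc y S.f, S.T.mul z z = y := by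
  have hmem : y ∈ Icc (S.T.mul y y) (S.T.mul S.f S.f) := ⟨S.T.mul_le_left y y, by rw [S.hf]; exact hy⟩
  obtain ⟨z, hz1, hz2⟩ := intermediate_value_Icc hy S.T.cont_sq.continuousOn hmem
  exact ⟨z, hz1, hz2⟩

open scoped Classical in
noncomputable def sqrtA (y : I) : I :=
  if h : ∃ z ∈ Icc y S.f, S.T.mul z z = y then h.choose else y

/-- The tower of iterated square roots of `x`. -/
noncomputable def tw : ℕ → I
  | 0 => S.x
  | n + 1 => S.sqrtA (tw n)

lemma tw_zero : S.tw 0 = S.x := rfl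

lemma tw_succ_eq (n : ℕ) (hle : S.tw n ≤ S.f) :
    S.tw n ≤ S.tw (n+1) ∧ S.tw (n+1) ≤ S.f ∧ S.T.mul (S.tw (n+1)) (S.tw (n+1)) = S.tw n := by
  have hex := S.exists_sqrt hle
  have h1 : S.tw (n+1) = hex.choose := by
    show S.sqrtA (S.tw n) = _
    rw [sqrtA]
    exact dif_pos hex
  exact ⟨h1 ▸ hex.choose_spec.1.1, h1 ▸ hex.choose_spec.1.2, h1 ▸ hex.choose_spec.2⟩

lemma tw_le_f (n : ℕ) : S.tw n ≤ S.f := by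
  induction n with
  | zero => exact S.hxf.le
  | succ k ih => exact (S.tw_succ_eq k ih).2.1

lemma tw_sq (n : ℕ) : S.T.mul (S.tw (n+1)) (S.tw (n+1)) = S.tw n :=
  (S.tw_succ_eq n (S.tw_le_f n)).2.2

lemma tw_mono_succ (n : ℕ) : S.tw n ≤ S.tw (n+1) :=
  (S.tw_succ_eq n (S.tw_le_f n)).1

lemma tw_mono : Monotone S.tw := monotone_nat_of_le_succ S.tw_mono_succ

lemma tw_pow (n k : ℕ) : S.T.pow (S.tw (n + k)) (2 ^ k) = S.tw n := by
  induction k with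
  | zero => simpa using S.T.pow_one (S.tw n)
  | succ j ih =>
    have h2 : (2:ℕ) ^ (j+1) = 2 * 2 ^ j := by ring
    rw [h2, S.T.pow_mul]
    have hsq : S.T.pow (S.tw (n + (j+1))) 2 = S.tw (n + j) := by
      show S.T.mul _ (S.T.mul _ (S.T.pow _ 0)) = _
      rw [ContinuousTNorm.pow_zero, S.T.mul_one]
      exact (show n + (j+1) = (n+j)+1 by omega) ▸ S.tw_sq (n+j)
    rw [hsq, ih]

lemma tw_ge_x (n : ℕ) : S.x ≤ S.tw n := S.tw_mono (Nat.zero_le n)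

lemma tw_lt_f (n : ℕ) : S.tw n < S.f := by
  rcases lt_or_eq_of_le (S.tw_le_f n) with h | h
  · exact h
  · exfalso
    have := S.tw_pow 0 n
    rw [show (0:ℕ) + n = n from by omega, h, S.T.pow_idem S.hf (Nat.one_le_two_pow)] at this
    rw [S.tw_zero] at this
    exact absurd this.symm S.hxf.ne

lemma tw_ge_e (n : ℕ) : S.e ≤ S.tw n := S.hex.le.trans (S.tw_ge_x n)

/-- Tower tends to `f`. -/
lemma tw_tendsto : Filter.Tendsto S.tw Filter.atTop (𝓝 S.f) := by
  have hbd := OrderTop.bddAbove (Set.range S.tw)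
  set L := ⨆ n, S.tw n with hL
  have htd : Filter.Tendsto S.tw Filter.atTop (𝓝 L) := tendsto_atTop_ciSup S.tw_mono hbd
  have htd1 : Filter.Tendsto (fun n => S.tw (n+1)) Filter.atTop (𝓝 L) :=
    htd.comp (Filter.tendsto_add_atTop_nat 1)
  have htd2 : Filter.Tendsto (fun n => S.T.mul (S.tw (n+1)) (S.tw (n+1))) Filter.atTop
      (𝓝 (S.T.mul L L)) :=
    (S.T.continuous.tendsto (L, L)).comp (htd1.prodMk_nhds htd1)
  have hidem : S.T.mul L L = L := by
    refine tendsto_nhds_unique ?_ htd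
    simpa only [S.tw_sq] using htd2
  have hLf : L ≤ S.f := ciSup_le S.tw_le_f
  have hxL : S.x ≤ L := le_ciSup hbd 0
  rcases eq_or_lt_of_le hLf with h | h
  · rwa [h] at htd
  · exact absurd hidem (S.noidem L (S.hex.trans_le hxL) h)

/-- Dyadic powers: `pw n m = (x^(1/2^n))^m`. -/
noncomputable def pw (n m : ℕ) : I := S.T.pow (S.tw n) m

lemma pw_consistent (n m k : ℕ) : S.pw n m = S.pw (n + k) (m * 2 ^ k) := by
  show S.T.pow (S.tw n) m = S.T.pow (S.tw (n+k)) (m * 2^k)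
  rw [show m * 2^k = 2^k * m from by ring, S.T.pow_mul, S.tw_pow]

lemma pw_add (n a b : ℕ) : S.pw n (a + b) = S.T.mul (S.pw n a) (S.pw n b) := S.T.pow_add _ a b

lemma pw_mul_general (n m n' m' : ℕ) :
    S.T.mul (S.pw n m) (S.pw n' m') = S.pw (n + n') (m * 2 ^ n' + m' * 2 ^ n) := by
  rw [S.pw_consistent n m n', S.pw_consistent n' m' n, show n' + n = n + n' from by omega,
    ← S.pw_add]

lemma pw_anti_same (n : ℕ) {a b : ℕ} (h : a ≤ b) : S.pw n b ≤ S.pw n a :=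
  S.T.pow_anti_exp _ h

lemma pw_ge_e (n m : ℕ) : S.e ≤ S.pw n m := S.T.pow_ge_idem S.he (S.tw_ge_e n) m

lemma pw_le_tw (n : ℕ) {m : ℕ} (hm : 1 ≤ m) : S.pw n m ≤ S.tw n := by
  have := S.pw_anti_same n hm
  rwa [show S.pw n 1 = S.tw n from S.T.pow_one _] at this

lemma pw_le_f (n : ℕ) {m : ℕ} (hm : 1 ≤ m) : S.pw n m ≤ S.f :=
  (S.pw_le_tw n hm).trans (S.tw_le_f n)

/-- Real-valued comparison: the dyadic value determines the order (antitone). -/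
lemma pw_anti {n m n' m' : ℕ} (h : (m:ℝ) / 2 ^ n ≤ (m':ℝ) / 2 ^ n') :
    S.pw n' m' ≤ S.pw n m := by
  have hnat : m * 2 ^ n' ≤ m' * 2 ^ n := by
    have h2n : (0:ℝ) < 2 ^ n := by positivity
    have h2n' : (0:ℝ) < 2 ^ n' := by positivity
    rw [div_le_div_iff₀ h2n h2n'] at h
    exact_mod_cast h
  rw [S.pw_consistent n m n', S.pw_consistent n' m' n, show n' + n = n + n' from by omega]
  exact S.pw_anti_same _ hnat




/-- The continuous extension of dyadic powers: `P s = sup { pw n m | s < m/2^n }`. -/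
noncomputable def P (s : ℝ) : I := sSup {y : I | ∃ n m : ℕ, s < (m:ℝ)/2^n ∧ y = S.pw n m}

lemma Pset_nonempty (s : ℝ) : {y : I | ∃ n m : ℕ, s < (m:ℝ)/2^n ∧ y = S.pw n m}.Nonempty := by
  obtain ⟨m, hm⟩ := exists_nat_gt s
  exact ⟨S.pw 0 m, 0, m, by simpa using hm, rfl⟩

lemma P_ge_pw {s : ℝ} {n m : ℕ} (h : s < (m:ℝ)/2^n) : S.pw n m ≤ S.P s :=
  le_csSup (OrderTop.bddAbove _) ⟨n, m, h, rfl⟩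

lemma P_le_pw {s : ℝ} {n m : ℕ} (h : (m:ℝ)/2^n ≤ s) : S.P s ≤ S.pw n m := by
  refine csSup_le (S.Pset_nonempty s) ?_
  rintro y ⟨n', m', h', rfl⟩
  exact S.pw_anti (h.trans h'.le)

lemma P_antitone : Antitone S.P := by
  intro s s' h
  refine csSup_le (S.Pset_nonempty s') ?_
  rintro y ⟨n', m', h', rfl⟩
  exact le_csSup (OrderTop.bddAbove _) ⟨n', m', lt_of_le_of_lt h h', rfl⟩

lemma P_ge_e (s : ℝ) : S.e ≤ S.P s := by
  obtain ⟨y, n, m, h, rfl⟩ := S.Pset_nonempty s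
  exact (S.pw_ge_e n m).trans (S.P_ge_pw h)

lemma m_pos_of_dyadic_pos {s : ℝ} (hs : 0 ≤ s) {n m : ℕ} (h : s < (m:ℝ)/2^n) : 1 ≤ m := by
  by_contra hm
  push_neg at hm
  interval_cases m
  · simp at h; linarith

lemma P_le_f {s : ℝ} (hs : 0 ≤ s) : S.P s ≤ S.f := by
  refine csSup_le (S.Pset_nonempty s) ?_
  rintro y ⟨n', m', h', rfl⟩
  exact S.pw_le_f n' (m_pos_of_dyadic_pos hs h')

lemma P_dyadic {n m : ℕ} (hm : 1 ≤ m) : S.P ((m:ℝ)/2^n) = S.pw n m := by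
  refine le_antisymm (S.P_le_pw (le_refl _)) ?_
  have hk : ∀ k : ℕ, S.T.mul (S.pw n m) (S.tw k) ≤ S.P ((m:ℝ)/2^n) := by
    intro k
    have heq : S.T.mul (S.pw n m) (S.tw k) = S.pw (n+k) (m * 2^k + 1 * 2^n) := by
      rw [← S.pw_mul_general n m k 1]
      congr 1
      exact (S.T.pow_one _).symm
    rw [heq]
    refine S.P_ge_pw ?_
    have h2n : (0:ℝ) < 2^n := by positivity
    have h2k : (0:ℝ) < 2^k := by positivity
    rw [div_lt_div_iff₀ h2n (by positivity : (0:ℝ) < 2^(n+k))]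
    push_cast
    rw [pow_add]
    nlinarith
  have htd : Filter.Tendsto (fun k => S.T.mul (S.pw n m) (S.tw k)) Filter.atTop
      (𝓝 (S.T.mul (S.pw n m) S.f)) :=
    ((S.T.cont_right (S.pw n m)).tendsto S.f).comp S.tw_tendsto
  have hunit : S.T.mul (S.pw n m) S.f = S.pw n m := by
    rw [S.T.comm]; exact S.unit (S.pw_le_f n hm)
  rw [← hunit]
  exact le_of_tendsto htd (Filter.Eventually.of_forall hk)

lemma P_zero : S.P 0 = S.f := by
  refine le_antisymm (S.P_le_f (le_refl 0)) ?_
  have hk : ∀ k : ℕ, S.tw k ≤ S.P 0 := by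
    intro k
    have : S.pw k 1 ≤ S.P 0 := S.P_ge_pw (by positivity)
    rwa [show S.pw k 1 = S.tw k from S.T.pow_one _] at this
  exact le_of_tendsto S.tw_tendsto (Filter.Eventually.of_forall hk)

/-- Main approximation lemma: along any monotone dyadic approximation from above, `pw → P s`. -/
lemma P_tendsto_aux {s : ℝ} (mm : ℕ → ℕ) (h1 : ∀ k, s < (mm k:ℝ)/2^k)
    (h2 : ∀ k, ((mm (k+1)):ℝ)/2^(k+1) ≤ (mm k:ℝ)/2^k)
    (h3 : Filter.Tendsto (fun k => (mm k:ℝ)/2^k) Filter.atTop (𝓝 s)) :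
    Filter.Tendsto (fun k => S.pw k (mm k)) Filter.atTop (𝓝 (S.P s)) := by
  have hmono : Monotone fun k => S.pw k (mm k) :=
    monotone_nat_of_le_succ fun k => S.pw_anti (h2 k)
  have hsup : (⨆ k, S.pw k (mm k)) = S.P s := by
    refine le_antisymm (ciSup_le fun k => S.P_ge_pw (h1 k)) ?_
    refine csSup_le (S.Pset_nonempty s) ?_
    rintro y ⟨n', m', h', rfl⟩
    have : ∀ᶠ k in Filter.atTop, (mm k:ℝ)/2^k < (m':ℝ)/2^n' :=
      h3.eventually_lt_const h'
    obtain ⟨k, hk⟩ := this.exists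
    exact le_trans (S.pw_anti hk.le) (le_ciSup (f := fun k => S.pw k (mm k)) (OrderTop.bddAbove _) k)
  rw [← hsup]
  exact tendsto_atTop_ciSup hmono (OrderTop.bddAbove _)

lemma Q_tendsto {s : ℝ} (hs : 0 ≤ s) :
    Filter.Tendsto (fun k => S.pw k (msq s k)) Filter.atTop (𝓝 (S.P s)) :=
  S.P_tendsto_aux _ (msq_gt hs) (msq_mono hs) (msq_tendsto hs)

lemma P_add {s s' : ℝ} (hs : 0 ≤ s) (hs' : 0 ≤ s') :
    S.P (s + s') = S.T.mul (S.P s) (S.P s') := by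
  have hR : Filter.Tendsto (fun k => S.pw k (msq s k + msq s' k)) Filter.atTop
      (𝓝 (S.P (s + s'))) := by
    refine S.P_tendsto_aux _ (fun k => ?_) (fun k => ?_) ?_
    · push_cast [add_div]
      exact add_lt_add (msq_gt hs k) (msq_gt hs' k)
    · push_cast [add_div]
      exact add_le_add (msq_mono hs k) (msq_mono hs' k)
    · have := (msq_tendsto hs).add (msq_tendsto hs')
      simpa [add_div] using this
  have hQ : Filter.Tendsto (fun k => S.T.mul (S.pw k (msq s k)) (S.pw k (msq s' k)))
      Filter.atTop (𝓝 (S.T.mul (S.P s) (S.P s'))) :=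
    (S.T.continuous.tendsto (S.P s, S.P s')).comp ((S.Q_tendsto hs).prodMk_nhds (S.Q_tendsto hs'))
  refine tendsto_nhds_unique hR ?_
  simpa only [← S.pw_add] using hQ



/-- Strictness: if the further power is still above `e`, powers strictly decrease. -/
lemma pw_strict {n m n' m' : ℕ} (h : (m:ℝ)/2^n < (m':ℝ)/2^n') (he' : S.e < S.pw n' m') :
    S.pw n' m' < S.pw n m := by
  rcases lt_or_eq_of_le (S.pw_anti h.le) with hlt | heqv
  · exact hlt
  exfalso
  have hnat : m * 2^n' < m' * 2^n := by
    rw [div_lt_div_iff₀ (by positivity) (by positivity)] at h; exact_mod_cast h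
  set N := n + n' with hN
  set d := m' * 2^n - m * 2^n' with hd
  have hd1 : 1 ≤ d := by omega
  have hsum : m * 2^n' + d = m' * 2^n := by omega
  have h1 : S.pw n m = S.pw N (m * 2^n') := S.pw_consistent n m n'
  have h2 : S.pw n' m' = S.pw N (m' * 2^n) := by
    rw [S.pw_consistent n' m' n, show n' + n = N from by omega]
  have hrep : S.pw n' m' = S.T.mul (S.pw n m) (S.pw N d) := by
    rw [h1, h2, ← S.pw_add, hsum]
  have heq2 : S.pw n m = S.T.mul (S.pw n m) (S.pw N d) := heqv.symm.trans hrep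
  have hiter : ∀ k : ℕ, S.pw n m = S.T.mul (S.pw n m) (S.pw N ((k+1) * d)) := by
    intro k
    induction k with
    | zero => simpa using heq2
    | succ j ih =>
      calc S.pw n m = S.T.mul (S.pw n m) (S.pw N ((j+1) * d)) := ih
        _ = S.T.mul (S.T.mul (S.pw n m) (S.pw N d)) (S.pw N ((j+1)*d)) := by rw [← heq2]
        _ = S.T.mul (S.pw n m) (S.T.mul (S.pw N d) (S.pw N ((j+1)*d))) := S.T.assoc _ _ _
        _ = S.T.mul (S.pw n m) (S.pw N (d + (j+1)*d)) := by rw [← S.pw_add]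
        _ = S.T.mul (S.pw n m) (S.pw N ((j+1+1) * d)) := by ring_nf
  have hle : ∀ j : ℕ, S.pw n m ≤ S.T.pow S.x j := by
    intro j
    have h3 := hiter (j * 2^N - 1)
    have hj1 : 1 ≤ j * 2^N ∨ j = 0 := by
      rcases Nat.eq_zero_or_pos j with h | h
      · exact Or.inr h
      · exact Or.inl (Nat.mul_pos h (by positivity))
    rcases hj1 with hj1 | rfl
    · have hexp : (j * 2^N - 1 + 1) * d = j * 2^N * d := by
        rw [Nat.sub_add_cancel hj1]
      rw [hexp] at h3
      have h4 : S.pw n m ≤ S.pw N (j * 2^N * d) := h3 ▸ S.T.mul_le_right _ _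
      have h5 : S.pw N (j * 2^N * d) ≤ S.pw N (j * 2^N) := by
        refine S.pw_anti_same N ?_
        calc j * 2^N = j * 2^N * 1 := by ring
          _ ≤ j * 2^N * d := Nat.mul_le_mul_left _ hd1
      have h6 : S.pw N (j * 2^N) = S.T.pow S.x j := by
        have := S.pw_consistent 0 j N
        rw [show (0:ℕ) + N = N from by omega] at this
        rw [← this]
        rfl
      exact h4.trans (h5.trans_eq h6)
    · exact le_one' 
  have : S.pw n m ≤ S.e := by
    rw [← S.arch]
    exact le_ciInf hle
  rw [heqv] at he'
  exact absurd this (not_le_of_gt he')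

lemma exists_dyadic_between {s s' : ℝ} (hs : 0 ≤ s) (h : s < s') :
    ∃ k m : ℕ, 1 ≤ m ∧ s < (m:ℝ)/2^k ∧ ((m:ℝ)+1)/2^k < s' := by
  obtain ⟨k, hk⟩ := exists_pow_lt_of_lt_one (by linarith : (0:ℝ) < (s'-s)/2) (by norm_num : (1/2:ℝ) < 1)
  refine ⟨k, msq s k, Nat.le_add_left 1 _, msq_gt hs k, ?_⟩
  have h1 := msq_le hs k
  have h2 : ((1:ℝ)/2)^k = 1/2^k := by rw [div_pow, one_pow]
  rw [h2] at hk h1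
  rw [add_div]
  linarith

lemma P_lt_P {s s' : ℝ} (hs : 0 ≤ s) (hss : s < s') (hPs' : S.e < S.P s') : S.P s' < S.P s := by
  obtain ⟨k, m, hm1, h1, h2⟩ := exists_dyadic_between hs hss
  have hA : S.pw k m ≤ S.P s := S.P_ge_pw h1
  have hB : S.P s' ≤ S.pw k (m+1) := by
    refine S.P_le_pw ?_
    push_cast
    exact h2.le
  have hC : S.e < S.pw k (m+1) := lt_of_lt_of_le hPs' hB
  have hD : S.pw k (m+1) < S.pw k m := by
    refine S.pw_strict ?_ hC
    rw [div_lt_div_iff₀ (by positivity) (by positivity)]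
    push_cast
    nlinarith [pow_pos (show (0:ℝ) < 2 from by norm_num) k]
  exact lt_of_le_of_lt hB (lt_of_lt_of_le hD hA)

/-- The "inverse" of `P`. -/
noncomputable def sig (y : I) : ℝ := sSup {s : ℝ | 0 ≤ s ∧ y ≤ S.P s}

lemma sig_mem_zero {y : I} (hyf : y ≤ S.f) : 0 ∈ {s : ℝ | 0 ≤ s ∧ y ≤ S.P s} :=
  ⟨le_refl 0, by rw [S.P_zero]; exact hyf⟩

lemma sig_bddAbove {y : I} (he' : S.e < y) :
    BddAbove {s : ℝ | 0 ≤ s ∧ y ≤ S.P s} := by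
  have hn : ∃ n : ℕ, S.T.pow S.x n < y := by
    by_contra hcon
    push_neg at hcon
    have : y ≤ S.e := by rw [← S.arch]; exact le_ciInf hcon
    exact absurd this (not_le_of_gt he')
  obtain ⟨n, hn⟩ := hn
  refine ⟨n, ?_⟩
  rintro s ⟨hs0, hsy⟩
  by_contra hcon
  push_neg at hcon
  have : S.P s ≤ S.T.pow S.x n := by
    have := S.P_le_pw (n := 0) (m := n) (by simpa using hcon.le)
    simpa [pw, tw_zero] using this
  exact absurd (hsy.trans this) (not_le_of_gt hn)

lemma sig_nonneg {y : I} (he' : S.e < y) (hyf : y ≤ S.f) : 0 ≤ S.sig y :=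
  le_csSup (S.sig_bddAbove he') (S.sig_mem_zero hyf)

lemma sig_down_closed {y : I} {s s' : ℝ} (hs : 0 ≤ s) (hss : s ≤ s')
    (hmem : s' ∈ {s : ℝ | 0 ≤ s ∧ y ≤ S.P s}) : s ∈ {s : ℝ | 0 ≤ s ∧ y ≤ S.P s} :=
  ⟨hs, hmem.2.trans (S.P_antitone hss)⟩

/-- `P` inverts `sig`. -/
lemma P_sig {y : I} (he' : S.e < y) (hyf : y ≤ S.f) : S.P (S.sig y) = y := by
  set A := {s : ℝ | 0 ≤ s ∧ y ≤ S.P s} with hA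
  have hne : A.Nonempty := ⟨0, S.sig_mem_zero hyf⟩
  have hbdd := S.sig_bddAbove he'
  have hs0 : 0 ≤ S.sig y := S.sig_nonneg he' hyf
  refine le_antisymm ?_ ?_
  · -- P (sig y) ≤ y
    refine csSup_le (S.Pset_nonempty _) ?_
    rintro z ⟨n', m', h', rfl⟩
    have hq0 : (0:ℝ) < (m':ℝ)/2^n' := lt_of_le_of_lt hs0 h'
    have hnotA : ((m':ℝ)/2^n') ∉ A := fun hmem => absurd (le_csSup hbdd hmem) (not_le_of_gt h')
    have hPq : S.P ((m':ℝ)/2^n') < y := by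
      rcases lt_or_ge (S.P ((m':ℝ)/2^n')) y with h | h
      · exact h
      · exact absurd ⟨hq0.le, h⟩ hnotA
    have hm1 : 1 ≤ m' := m_pos_of_dyadic_pos (n := n') (le_refl 0) (by simpa using hq0)
    rw [S.P_dyadic hm1] at hPq
    exact hPq.le
  · -- y ≤ P (sig y)
    by_cases hmem : S.sig y ∈ A
    · exact hmem.2
    have hall : ∀ s : ℝ, 0 ≤ s → s < S.sig y → s ∈ A := by
      intro s h0 hlt
      obtain ⟨s'', hs'', hlt2⟩ := exists_lt_of_lt_csSup hne hlt
      exact S.sig_down_closed h0 hlt2.le hs''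
    have hσpos : 0 < S.sig y := by
      rcases lt_or_eq_of_le hs0 with h | h
      · exact h
      · exact absurd (h ▸ S.sig_mem_zero hyf) hmem
    have hkey : ∀ j : ℕ, (1/2:ℝ)^j < S.sig y → S.T.mul y (S.tw j) ≤ S.P (S.sig y) := by
      intro j hj
      set sg := S.sig y with hsg
      -- choose k
      obtain ⟨k0, hk0⟩ := exists_pow_lt_of_lt_one (by linarith : (0:ℝ) < sg - (1/2)^j)
        (by norm_num : (1/2:ℝ) < 1)
      set k := max k0 (j+1) with hk
      have hkj : j < k := lt_of_lt_of_le (Nat.lt_succ_self j) (le_max_right _ _)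
      have hkk0 : (1/2:ℝ)^k ≤ (1/2)^k0 :=
        pow_le_pow_of_le_one (by norm_num) (by norm_num) (le_max_left _ _)
      have hks : (1/2:ℝ)^k < sg - (1/2)^j := lt_of_le_of_lt hkk0 hk0
      set m := msq sg k with hm
      have hm_gt : sg < (m:ℝ)/2^k := msq_gt hσpos.le k
      have hm_le : (m:ℝ)/2^k ≤ sg + (1/2)^k := msq_le hσpos.le k
      have hkk : (2:ℝ)^k = 2^(k-j) * 2^j := by rw [← pow_add, Nat.sub_add_cancel hkj.le]
      have hpow : ((2:ℝ))^(k-j) / 2^k = (1/2)^j := by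
        rw [hkk, div_pow, one_pow, div_eq_div_iff (by positivity) (by positivity)]
        ring
      have hmge : 2^(k-j) + 1 ≤ m := by
        -- (m:ℝ) > σ 2^k ≥ (2^(k-j) + ... )
        have h1 : ((2:ℝ))^(k-j) + 1 ≤ sg * 2^k := by
          have h2 : (1/2:ℝ)^j * 2^k = 2^(k-j) := by
            rw [hkk, div_pow, one_pow]
            field_simp
          have h3 : ((1/2:ℝ)^j + (1/2)^k) * 2^k ≤ sg * 2^k := by
            have : (1/2:ℝ)^j + (1/2)^k ≤ sg := by linarith
            exact mul_le_mul_of_nonneg_right this (by positivity)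
          have h4 : ((1/2:ℝ)^k) * 2^k = 1 := by
            rw [div_pow, one_pow, div_mul_eq_mul_div, one_mul, div_self (by positivity : ((2:ℝ))^k ≠ 0)]
          calc ((2:ℝ))^(k-j) + 1 = (1/2:ℝ)^j * 2^k + (1/2)^k * 2^k := by rw [h2, h4]
            _ = ((1/2:ℝ)^j + (1/2)^k) * 2^k := by ring
            _ ≤ sg * 2^k := h3
        have h5 : sg * 2^k < m := by
          have := msq_gt hσpos.le k
          rwa [lt_div_iff₀ (by positivity : (0:ℝ) < 2^k)] at this
        have : ((2:ℝ))^(k-j) + 1 < (m:ℝ) := lt_of_le_of_lt h1 h5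
        have h6 : ((2^(k-j) + 1 : ℕ):ℝ) < ((m:ℕ):ℝ) := by push_cast; linarith
        exact_mod_cast h6.le
      set m' := m - 2^(k-j) with hm'
      have hm'1 : 1 ≤ m' := by omega
      have hm'c : (m':ℝ) = (m:ℝ) - 2^(k-j) := by
        have : ((m' : ℕ):ℝ) = ((m:ℕ):ℝ) - ((2^(k-j):ℕ):ℝ) := by
          rw [hm']
          push_cast [Nat.cast_sub (by omega : 2^(k-j) ≤ m)]
          ring
        rw [this]
        push_cast
        ring
      have hq1_lt : (m':ℝ)/2^k < sg := by
        rw [hm'c, sub_div, hpow]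
        have : (1/2:ℝ)^k < (1/2)^j := by
          apply pow_lt_pow_right_of_lt_one₀ (by norm_num) (by norm_num) hkj
        linarith
      have hq1_mem : ((m':ℝ)/2^k) ∈ A := hall _ (by positivity) hq1_lt
      have hy_le : y ≤ S.pw k m' := by
        have := hq1_mem.2
        rwa [S.P_dyadic hm'1] at this
      have hsplit : S.pw k m = S.T.mul (S.pw k m') (S.tw j) := by
        have h7 : m' + 2^(k-j) = m := by omega
        have h8 : S.pw k (2^(k-j)) = S.tw j := by
          have := S.pw_consistent j 1 (k-j)
          rw [show j + (k-j) = k from by omega, one_mul] at this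
          rw [← this]
          exact S.T.pow_one _
        rw [← h7, S.pw_add, h8]
      have hPm : S.pw k m ≤ S.P sg := S.P_ge_pw hm_gt
      calc S.T.mul y (S.tw j) ≤ S.T.mul (S.pw k m') (S.tw j) := S.T.mono hy_le (le_refl _)
        _ = S.pw k m := hsplit.symm
        _ ≤ S.P sg := hPm
    have htd : Filter.Tendsto (fun j => S.T.mul y (S.tw j)) Filter.atTop (𝓝 (S.T.mul y S.f)) :=
      ((S.T.cont_right y).tendsto S.f).comp S.tw_tendsto
    have hy : S.T.mul y S.f = y := by rw [S.T.comm]; exact S.unit hyf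
    have hev : ∀ᶠ j : ℕ in Filter.atTop, (1/2:ℝ)^j < S.sig y := by
      have h0 : Filter.Tendsto (fun j : ℕ => (1/2:ℝ)^j) Filter.atTop (𝓝 0) :=
        tendsto_pow_atTop_nhds_zero_of_lt_one (by norm_num) (by norm_num)
      exact h0.eventually (gt_mem_nhds hσpos)
    have hfin : S.T.mul y S.f ≤ S.P (S.sig y) := le_of_tendsto htd (hev.mono hkey)
    calc y = S.T.mul y S.f := hy.symm
      _ ≤ S.P (S.sig y) := hfin
    
/-- `sig` inverts `P`. -/
lemma sig_P {s : ℝ} (hs : 0 ≤ s) (hP : S.e < S.P s) : S.sig (S.P s) = s := by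
  set y := S.P s with hy
  have hyf : y ≤ S.f := S.P_le_f hs
  have hbdd := S.sig_bddAbove hP
  refine le_antisymm ?_ (le_csSup hbdd ⟨hs, le_refl _⟩)
  refine csSup_le ⟨s, hs, le_refl _⟩ ?_
  rintro s' ⟨hs'0, hs'⟩
  by_contra hcon
  push_neg at hcon
  have := S.P_lt_P hs hcon (lt_of_lt_of_le hP hs')
  exact absurd hs' (not_le_of_gt this)

/-- `[e,f]` is closed under multiplication. -/
lemma icc_closed {a b : I} (ha : a ∈ Icc S.e S.f) (hb : b ∈ Icc S.e S.f) :
    S.T.mul a b ∈ Icc S.e S.f :=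
  ⟨S.he ▸ S.T.mono ha.1 hb.1, S.hf ▸ S.T.mono ha.2 hb.2⟩




end TSetup

lemma exists_tsetup (T : ContinuousTNorm) (x : I) (hx : T.mul x x ≠ x) :
    ∃ S : TSetup, S.T = T ∧ S.x = x := by
  classical
  set E := {y : I | T.mul y y = y} with hE
  have hEclosed : IsClosed E := isClosed_eq T.cont_sq continuous_id
  have h0 : (0:I) ∈ E ∩ Iic x := ⟨le_antisymm (T.mul_le_right 0 0) nonneg', nonneg'⟩
  have h1 : (1:I) ∈ E ∩ Ici x := ⟨T.one_mul' 1, le_one'⟩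
  set e := sSup (E ∩ Iic x) with he'
  set f := sInf (E ∩ Ici x) with hf'
  have hemem : e ∈ E ∩ Iic x :=
    (hEclosed.inter isClosed_Iic).csSup_mem ⟨0, h0⟩ (OrderTop.bddAbove _)
  have hfmem : f ∈ E ∩ Ici x :=
    (hEclosed.inter isClosed_Ici).csInf_mem ⟨1, h1⟩ (OrderBot.bddBelow _)
  have hex : e < x := lt_of_le_of_ne hemem.2 (fun h => hx (h ▸ hemem.1))
  refine ⟨⟨T, x, e, f, hemem.1, hfmem.1, hex, ?_, ?_⟩, rfl, rfl⟩
  · exact lt_of_le_of_ne hfmem.2 (fun h => hx (h.symm ▸ hfmem.1))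
  · intro c hec hcf hcc
    rcases le_or_gt c x with h | h
    · have : c ≤ e := le_csSup (OrderTop.bddAbove _) ⟨hcc, h⟩
      exact absurd this (not_le_of_gt hec)
    · have : f ≤ c := csInf_le (OrderBot.bddBelow _) ⟨hcc, h.le⟩
      exact absurd this (not_le_of_gt hcf)

/-- For every non-idempotent `x` of a continuous t-norm there are idempotents `e < x < f`
such that `[e,f]` is closed under `⊗` and, as a quantale with unit `f`, is isomorphic to
`[0,1]` with either multiplication or the Łukasiewicz tensor. -/
theorem tnorm_interval_around_non_idempotent (T : ContinuousTNorm) (x : I)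
    (hx : T.mul x x ≠ x) :
    ∃ e f : I, T.mul e e = e ∧ T.mul f f = f ∧
      ∃ (hex : e < x) (hxf : x < f)
        (hcl : ∀ a b : I, a ∈ Set.Icc e f → b ∈ Set.Icc e f → T.mul a b ∈ Set.Icc e f),
        ∃ φ : Set.Icc e f → I, StrictMono φ ∧ Function.Bijective φ ∧
          φ ⟨e, Set.left_mem_Icc.mpr (hex.trans hxf).le⟩ = 0 ∧
          φ ⟨f, Set.right_mem_Icc.mpr (hex.trans hxf).le⟩ = 1 ∧
          ((∀ (a b : I) (ha : a ∈ Set.Icc e f) (hb : b ∈ Set.Icc e f),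
              (φ ⟨T.mul a b, hcl a b ha hb⟩ : ℝ) = (φ ⟨a, ha⟩ : ℝ) * (φ ⟨b, hb⟩ : ℝ)) ∨
            (∀ (a b : I) (ha : a ∈ Set.Icc e f) (hb : b ∈ Set.Icc e f),
              (φ ⟨T.mul a b, hcl a b ha hb⟩ : ℝ) =
                max 0 ((φ ⟨a, ha⟩ : ℝ) + (φ ⟨b, hb⟩ : ℝ) - 1))) := by
  classical
  obtain ⟨S, hT, hxx⟩ := exists_tsetup T x hx
  subst hT; subst hxx
  refine ⟨S.e, S.f, S.he, S.hf, S.hex, S.hxf, fun a b ha hb => S.icc_closed ha hb, ?_⟩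
  by_cases hnil : ∃ k : ℕ, S.T.pow S.x k = S.e
  · -- Nilpotent case: Łukasiewicz
    obtain ⟨k, hk⟩ := hnil
    set Z := {s : ℝ | 0 ≤ s ∧ S.P s = S.e} with hZ
    have hZne : Z.Nonempty := by
      refine ⟨(k:ℝ), Nat.cast_nonneg k, le_antisymm ?_ (S.P_ge_e _)⟩
      have h1 : S.P (k:ℝ) ≤ S.pw 0 k := S.P_le_pw (by simp)
      have h2 : S.pw 0 k = S.e := by
        show S.T.pow (S.tw 0) k = S.e
        rw [S.tw_zero]; exact hk
      exact h1.trans_eq h2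
    have hZbd : BddBelow Z := ⟨0, fun s hs => hs.1⟩
    set t0 := sInf Z with ht0
    have ht00 : 0 ≤ t0 := le_csInf hZne (fun s hs => hs.1)
    have hPgt' : ∀ s : ℝ, t0 < s → S.P s = S.e := by
      intro s hs
      obtain ⟨s0, hs0, hlt⟩ := exists_lt_of_csInf_lt hZne hs
      exact le_antisymm ((S.P_antitone hlt.le).trans_eq hs0.2) (S.P_ge_e s)
    have hPt0 : S.P t0 = S.e := by
      refine le_antisymm ?_ (S.P_ge_e _)
      refine csSup_le (S.Pset_nonempty _) ?_
      rintro z ⟨n', m', h', rfl⟩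
      have hm1 : 1 ≤ m' := TSetup.m_pos_of_dyadic_pos (n := n') ht00 h'
      have := hPgt' _ h'
      rw [S.P_dyadic hm1] at this
      exact this.le
    have hPe_of : ∀ s : ℝ, 0 ≤ s → t0 ≤ s → S.P s = S.e := by
      intro s _ hs
      rcases eq_or_lt_of_le hs with h | h
      · rw [← h]; exact hPt0
      · exact hPgt' s h
    have hPgt : ∀ s : ℝ, 0 ≤ s → s < t0 → S.e < S.P s := by
      intro s hs0 hst
      rcases lt_or_eq_of_le (S.P_ge_e s) with h | h
      · exact h
      · exact absurd (csInf_le hZbd ⟨hs0, h.symm⟩) (not_le_of_gt hst)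
    have ht0pos : 0 < t0 := by
      rcases lt_or_eq_of_le ht00 with h | h
      · exact h
      · exfalso
        have := hPe_of 0 (le_refl 0) h.ge
        rw [S.P_zero] at this
        exact absurd this S.hef.ne'
    have hsig_lt : ∀ y : I, S.e < y → y ≤ S.f → S.sig y < t0 := by
      intro y hey hyf
      rcases lt_or_ge (S.sig y) t0 with h | h
      · exact h
      · exfalso
        have := hPe_of _ (S.sig_nonneg hey hyf) h
        rw [S.P_sig hey hyf] at this
        exact absurd this hey.ne'
    set φ : Set.Icc S.e S.f → I := fun y =>
      if h : (y:I) = S.e then 0 else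
        ⟨1 - S.sig (y:I) / t0, by
          have hey : S.e < (y:I) := lt_of_le_of_ne y.2.1 (Ne.symm h)
          have h1 := S.sig_nonneg hey y.2.2
          have h2 := hsig_lt (y:I) hey y.2.2
          constructor
          · have : S.sig (y:I) / t0 < 1 := (div_lt_one ht0pos).mpr h2
            linarith
          · have : 0 ≤ S.sig (y:I) / t0 := div_nonneg h1 ht00
            linarith⟩ with hφ
    have hφval : ∀ (y : Set.Icc S.e S.f) (h : (y:I) ≠ S.e),
        (φ y : ℝ) = 1 - S.sig (y:I) / t0 := by
      intro y h
      rw [hφ]; simp only [dif_neg h]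
    have hφzero : ∀ (y : Set.Icc S.e S.f) (h : (y:I) = S.e), φ y = 0 := by
      intro y h
      rw [hφ]; simp only [dif_pos h]
    have hmono : StrictMono φ := by
      intro a b hab
      have hab' : (a:I) < (b:I) := hab
      have hbe : (b:I) ≠ S.e := fun h => absurd ((h ▸ hab').trans_le a.2.1) (lt_irrefl _)
      have heb : S.e < (b:I) := lt_of_le_of_ne b.2.1 (Ne.symm hbe)
      by_cases hae : (a:I) = S.e
      · rw [hφzero a hae]
        have : (0:ℝ) < 1 - S.sig (b:I) / t0 := by
          have h2 := hsig_lt (b:I) heb b.2.2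
          have : S.sig (b:I) / t0 < 1 := (div_lt_one ht0pos).mpr h2
          linarith
        show (0:I) < _
        rw [← Subtype.coe_lt_coe, hφval b hbe]
        simpa using this
      · have hea : S.e < (a:I) := lt_of_le_of_ne a.2.1 (Ne.symm hae)
        have hss : S.sig (b:I) < S.sig (a:I) := by
          rcases lt_or_ge (S.sig (b:I)) (S.sig (a:I)) with h | h
          · exact h
          · exfalso
            have := S.P_antitone h
            rw [S.P_sig hea a.2.2, S.P_sig heb b.2.2] at this
            exact absurd hab' (not_lt_of_ge this)
        rw [← Subtype.coe_lt_coe, hφval a hae, hφval b hbe]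
        have h1 : S.sig (b:I) / t0 < S.sig (a:I) / t0 := by
          rw [div_lt_div_iff_of_pos_right ht0pos]
          exact hss
        linarith
    refine ⟨φ, hmono, ⟨hmono.injective, ?_⟩, ?_, ?_, Or.inr ?_⟩
    · -- surjective
      intro t
      by_cases ht : t = 0
      · exact ⟨⟨S.e, Set.left_mem_Icc.mpr S.hef.le⟩, by rw [hφzero _ rfl, ht]⟩
      · have htpos : (0:ℝ) < t := lt_of_le_of_ne t.2.1 (fun h => ht (by ext; exact h.symm))
        set s := (1 - (t:ℝ)) * t0 with hs
        have hs0 : 0 ≤ s := mul_nonneg (by have := t.2.2; linarith) ht00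
        have hst0 : s < t0 := by
          have h1 : 1 - (t:ℝ) < 1 := by linarith
          calc s < 1 * t0 := by
                refine mul_lt_mul_of_pos_right h1 ht0pos
            _ = t0 := one_mul t0
        have hey : S.e < S.P s := hPgt s hs0 hst0
        have hyf : S.P s ≤ S.f := S.P_le_f hs0
        refine ⟨⟨S.P s, ⟨S.P_ge_e s, hyf⟩⟩, ?_⟩
        have hne : (⟨S.P s, ⟨S.P_ge_e s, hyf⟩⟩ : Set.Icc S.e S.f).1 ≠ S.e := hey.ne'
        ext
        rw [hφval _ hne]
        show 1 - S.sig (S.P s) / t0 = (t:ℝ)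
        rw [S.sig_P hs0 hey, hs]
        field_simp
        ring
    · exact hφzero _ rfl
    · have hne : S.f ≠ S.e := S.hef.ne'
      have hfe : S.e < S.f := S.hef
      ext
      rw [hφval _ hne]
      show 1 - S.sig S.f / t0 = 1
      have : S.sig S.f = 0 := by
        have := S.sig_P (le_refl 0) (by rw [S.P_zero]; exact hfe)
        rwa [S.P_zero] at this
      rw [this]
      simp
    · -- Łukasiewicz law
      intro a b ha hb
      by_cases hae : a = S.e
      · have hmul : S.T.mul a b = S.e := by rw [hae]; exact S.mul_e_left hb.1
        rw [hφzero ⟨S.T.mul a b, _⟩ hmul, hφzero ⟨a, ha⟩ hae]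
        have hb1 : (φ ⟨b, hb⟩ : ℝ) ≤ 1 := (φ ⟨b, hb⟩).2.2
        simp only [Icc.coe_zero]
        rw [max_eq_left (by linarith)]
      · by_cases hbe : b = S.e
        · have hmul : S.T.mul a b = S.e := by
            rw [S.T.comm, hbe]; exact S.mul_e_left ha.1
          rw [hφzero ⟨S.T.mul a b, _⟩ hmul, hφzero ⟨b, hb⟩ hbe]
          have ha1 : (φ ⟨a, ha⟩ : ℝ) ≤ 1 := (φ ⟨a, ha⟩).2.2
          simp only [Icc.coe_zero]
          rw [max_eq_left (by linarith)]
        · have hea : S.e < a := lt_of_le_of_ne ha.1 (Ne.symm hae)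
          have heb : S.e < b := lt_of_le_of_ne hb.1 (Ne.symm hbe)
          have hsa := S.sig_nonneg hea ha.2
          have hsb := S.sig_nonneg heb hb.2
          have hmul : S.T.mul a b = S.P (S.sig a + S.sig b) := by
            have h1 := S.P_add hsa hsb
            rw [S.P_sig hea ha.2, S.P_sig heb hb.2] at h1
            exact h1.symm
          have hsalt := hsig_lt a hea ha.2
          have hsblt := hsig_lt b heb hb.2
          rw [hφval ⟨a, ha⟩ hae, hφval ⟨b, hb⟩ hbe]
          rcases lt_or_ge (S.sig a + S.sig b) t0 with hcase | hcase
          · have hegt : S.e < S.T.mul a b := hmul ▸ hPgt _ (add_nonneg hsa hsb) hcase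
            have hsig : S.sig (S.T.mul a b) = S.sig a + S.sig b := by
              rw [hmul]
              exact S.sig_P (add_nonneg hsa hsb) (hmul ▸ hegt)
            rw [hφval ⟨S.T.mul a b, _⟩ hegt.ne']
            show 1 - S.sig (S.T.mul a b) / t0 = _
            rw [hsig]
            have hlt1 : (S.sig a + S.sig b) / t0 < 1 := (div_lt_one ht0pos).mpr hcase
            have heqd : (S.sig a + S.sig b)/t0 = S.sig a/t0 + S.sig b/t0 := add_div _ _ _
            rw [max_eq_right (by linarith)]
            linarith
          · have hmule : S.T.mul a b = S.e := hmul.trans (hPe_of _ (add_nonneg hsa hsb) hcase)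
            rw [hφzero ⟨S.T.mul a b, _⟩ hmule]
            have hge1 : 1 ≤ (S.sig a + S.sig b) / t0 := (one_le_div ht0pos).mpr hcase
            have heqd : (S.sig a + S.sig b)/t0 = S.sig a/t0 + S.sig b/t0 := add_div _ _ _
            simp only [Icc.coe_zero]
            rw [max_eq_left (by linarith)]
  · -- Strict case: multiplication
    push_neg at hnil
    have hstrict : ∀ n : ℕ, S.e < S.T.pow S.x n := fun n =>
      lt_of_le_of_ne (S.T.pow_ge_idem S.he S.hex.le n) (Ne.symm (hnil n))
    have hPpos : ∀ s : ℝ, S.e < S.P s := by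
      intro s
      obtain ⟨z, n, m, h', rfl⟩ := S.Pset_nonempty s
      have h1 : S.T.pow S.x m ≤ S.pw n m := by
        have : S.pw 0 m = S.T.pow S.x m := by
          show S.T.pow (S.tw 0) m = _
          rw [S.tw_zero]
        rw [← this]
        refine S.pw_anti ?_
        have h2 : (1:ℝ) ≤ 2^n := one_le_pow₀ (by norm_num)
        rw [div_le_div_iff₀ (by positivity) (by positivity)]
        simp only [pow_zero, mul_one, one_mul]
        nlinarith [Nat.cast_nonneg (α := ℝ) m]
      exact lt_of_lt_of_le (hstrict m) (h1.trans (S.P_ge_pw h'))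
    set φ : Set.Icc S.e S.f → I := fun y =>
      if h : (y:I) = S.e then 0 else
        ⟨(2:ℝ) ^ (-(S.sig (y:I))), by
          have hey : S.e < (y:I) := lt_of_le_of_ne y.2.1 (Ne.symm h)
          have h1 := S.sig_nonneg hey y.2.2
          constructor
          · exact (Real.rpow_pos_of_pos (by norm_num) _).le
          · exact Real.rpow_le_one_of_one_le_of_nonpos (by norm_num) (by linarith)⟩ with hφ
    have hφval : ∀ (y : Set.Icc S.e S.f) (h : (y:I) ≠ S.e),
        (φ y : ℝ) = (2:ℝ) ^ (-(S.sig (y:I))) := by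
      intro y h
      rw [hφ]; simp only [dif_neg h]
    have hφzero : ∀ (y : Set.Icc S.e S.f) (h : (y:I) = S.e), φ y = 0 := by
      intro y h
      rw [hφ]; simp only [dif_pos h]
    have hmono : StrictMono φ := by
      intro a b hab
      have hab' : (a:I) < (b:I) := hab
      have hbe : (b:I) ≠ S.e := fun h => absurd ((h ▸ hab').trans_le a.2.1) (lt_irrefl _)
      have heb : S.e < (b:I) := lt_of_le_of_ne b.2.1 (Ne.symm hbe)
      by_cases hae : (a:I) = S.e
      · rw [hφzero a hae]
        show (0:I) < _
        rw [← Subtype.coe_lt_coe, hφval b hbe]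
        simpa using Real.rpow_pos_of_pos (by norm_num : (0:ℝ) < 2) _
      · have hea : S.e < (a:I) := lt_of_le_of_ne a.2.1 (Ne.symm hae)
        have hss : S.sig (b:I) < S.sig (a:I) := by
          rcases lt_or_ge (S.sig (b:I)) (S.sig (a:I)) with h | h
          · exact h
          · exfalso
            have := S.P_antitone h
            rw [S.P_sig hea a.2.2, S.P_sig heb b.2.2] at this
            exact absurd hab' (not_lt_of_ge this)
        rw [← Subtype.coe_lt_coe, hφval a hae, hφval b hbe]
        exact Real.rpow_lt_rpow_left_iff (by norm_num : (1:ℝ) < 2) |>.mpr (by linarith)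
    refine ⟨φ, hmono, ⟨hmono.injective, ?_⟩, ?_, ?_, Or.inl ?_⟩
    · intro t
      by_cases ht : t = 0
      · exact ⟨⟨S.e, Set.left_mem_Icc.mpr S.hef.le⟩, by rw [hφzero _ rfl, ht]⟩
      · have htpos : (0:ℝ) < t := lt_of_le_of_ne t.2.1 (fun h => ht (by ext; exact h.symm))
        set s := -(Real.logb 2 (t:ℝ)) with hs
        have hs0 : 0 ≤ s := by
          rw [hs, neg_nonneg]
          exact Real.logb_nonpos (by norm_num) htpos.le t.2.2
        have hey : S.e < S.P s := hPpos s
        have hyf : S.P s ≤ S.f := S.P_le_f hs0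
        refine ⟨⟨S.P s, ⟨S.P_ge_e s, hyf⟩⟩, ?_⟩
        have hne : (⟨S.P s, ⟨S.P_ge_e s, hyf⟩⟩ : Set.Icc S.e S.f).1 ≠ S.e := hey.ne'
        ext
        rw [hφval _ hne]
        show (2:ℝ) ^ (-(S.sig (S.P s))) = (t:ℝ)
        rw [S.sig_P hs0 hey, hs, neg_neg]
        exact Real.rpow_logb (by norm_num) (by norm_num) htpos
    · exact hφzero _ rfl
    · have hne : S.f ≠ S.e := S.hef.ne'
      ext
      rw [hφval _ hne]
      show (2:ℝ) ^ (-(S.sig S.f)) = 1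
      have : S.sig S.f = 0 := by
        have := S.sig_P (le_refl 0) (by rw [S.P_zero]; exact S.hef)
        rwa [S.P_zero] at this
      rw [this, neg_zero, Real.rpow_zero]
    · -- multiplicative law
      intro a b ha hb
      by_cases hae : a = S.e
      · have hmul : S.T.mul a b = S.e := by rw [hae]; exact S.mul_e_left hb.1
        rw [hφzero ⟨S.T.mul a b, _⟩ hmul, hφzero ⟨a, ha⟩ hae]
        simp
      · by_cases hbe : b = S.e
        · have hmul : S.T.mul a b = S.e := by
            rw [S.T.comm, hbe]; exact S.mul_e_left ha.1
          rw [hφzero ⟨S.T.mul a b, _⟩ hmul, hφzero ⟨b, hb⟩ hbe]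
          simp
        · have hea : S.e < a := lt_of_le_of_ne ha.1 (Ne.symm hae)
          have heb : S.e < b := lt_of_le_of_ne hb.1 (Ne.symm hbe)
          have hsa := S.sig_nonneg hea ha.2
          have hsb := S.sig_nonneg heb hb.2
          have hmul : S.T.mul a b = S.P (S.sig a + S.sig b) := by
            have h1 := S.P_add hsa hsb
            rw [S.P_sig hea ha.2, S.P_sig heb hb.2] at h1
            exact h1.symm
          have hegt : S.e < S.T.mul a b := hmul ▸ hPpos _
          have hsig : S.sig (S.T.mul a b) = S.sig a + S.sig b := by
            rw [hmul]
            exact S.sig_P (add_nonneg hsa hsb) (hmul ▸ hegt)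
          rw [hφval ⟨S.T.mul a b, _⟩ hegt.ne', hφval ⟨a, ha⟩ hae, hφval ⟨b, hb⟩ hbe]
          show (2:ℝ) ^ (-(S.sig (S.T.mul a b))) = _
          rw [hsig, neg_add, Real.rpow_add (by norm_num : (0:ℝ) < 2)]
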